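/- For any n×n integer matrix A with n ≥ 3 odd, and any integer p, there exist X, Y, Z in M_n(ℤ) with A = X + Y + Z and det(X) = det(Y) = det(Z) = p. -/
import Mathlib
open Matrix Finset

def cyc (m : ℕ) (z : Fin (m+1) → ℤ) (c : ℤ) : Matrix (Fin (m+1)) (Fin (m+1)) ℤ :=
  Matrix.of fun i j => if i = j then z i else if (j:ℕ) = (i:ℕ)+1 then 1
    else if (i:ℕ) = m ∧ (j:ℕ) = 0 then c else 0

lemma cyc_minor0 (m : ℕ) (z : Fin (m+1) → ℤ) (c : ℤ) :
    ((cyc m z c).submatrix (Fin.succAbove 0) Fin.succ).det = ∏ i : Fin m, z i.succ := by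
  rw [Matrix.det_of_upperTriangular]
  · refine Finset.prod_congr rfl fun i _ => ?_
    simp [cyc, Fin.succAbove]
  · intro i j hij
    have hij' : (j:ℕ) < (i:ℕ) := hij
    simp only [Matrix.submatrix_apply, Fin.succAbove_zero]
    have e1 : (i.succ : Fin (m+1)) ≠ j.succ := by
      simp only [ne_eq, Fin.ext_iff, Fin.val_succ]; omega
    have e2 : ((j.succ : Fin (m+1)):ℕ) ≠ (i.succ:ℕ)+1 := by
      simp only [ne_eq, Fin.val_succ]; omega
    have e3 : ¬ (((i.succ : Fin (m+1)):ℕ) = m ∧ ((j.succ : Fin (m+1)):ℕ) = 0) := by simp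
    simp only [cyc, Matrix.of_apply]
    rw [if_neg e1, if_neg e2, if_neg e3]

lemma cyc_minorl (m : ℕ) (z : Fin (m+1) → ℤ) (c : ℤ) :
    ((cyc m z c).submatrix (Fin.last m).succAbove Fin.succ).det = 1 := by
  rw [Matrix.det_of_lowerTriangular]
  · refine Finset.prod_eq_one fun i _ => ?_
    have h : (Fin.last m).succAbove i = i.castSucc := Fin.succAbove_last_apply i
    have e1 : (i.castSucc : Fin (m+1)) ≠ i.succ := by
      simp only [ne_eq, Fin.ext_iff, Fin.val_succ, Fin.coe_castSucc]; omega
    simp only [Matrix.submatrix_apply, h, cyc, Matrix.of_apply]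
    rw [if_neg e1, if_pos (by simp)]
  · intro i j hij
    have hij' : (i:ℕ) < (j:ℕ) := hij
    have h : (Fin.last m).succAbove i = i.castSucc := Fin.succAbove_last_apply i
    have e1 : (i.castSucc : Fin (m+1)) ≠ j.succ := by
      simp only [ne_eq, Fin.ext_iff, Fin.val_succ, Fin.coe_castSucc]; omega
    have e2 : ((j.succ : Fin (m+1)):ℕ) ≠ (i.castSucc:ℕ)+1 := by
      simp only [ne_eq, Fin.val_succ, Fin.coe_castSucc]; omega
    have e3 : ¬ (((i.castSucc : Fin (m+1)):ℕ) = m ∧ ((j.succ : Fin (m+1)):ℕ) = 0) := by simp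
    simp only [Matrix.submatrix_apply, h, cyc, Matrix.of_apply]
    rw [if_neg e1, if_neg e2, if_neg e3]

lemma cyc_det (m : ℕ) (hm : 1 ≤ m) (z : Fin (m+1) → ℤ) (c : ℤ) :
    (cyc m z c).det = ∏ i, z i + (-1)^m * c := by
  rw [Matrix.det_succ_column_zero]
  have h0l : (0 : Fin (m+1)) ≠ Fin.last m := by
    simp only [ne_eq, Fin.ext_iff, Fin.val_zero, Fin.val_last]; omega
  have hzero : ∀ i ∈ (Finset.univ : Finset (Fin (m+1))),
      i ∉ ({0, Fin.last m} : Finset (Fin (m+1))) →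
      (-1:ℤ)^(i:ℕ) * cyc m z c i 0 * ((cyc m z c).submatrix i.succAbove Fin.succ).det = 0 := by
    intro i _ hi
    simp only [Finset.mem_insert, Finset.mem_singleton, not_or] at hi
    have h2 : (i:ℕ) ≠ m := fun h => hi.2 (by simp [Fin.ext_iff, Fin.val_last, h])
    have hc : cyc m z c i 0 = 0 := by
      simp only [cyc, Matrix.of_apply]
      rw [if_neg hi.1, if_neg (by simp), if_neg (by simp [h2])]
    rw [hc]; ring
  rw [← Finset.sum_subset (Finset.subset_univ ({0, Fin.last m} : Finset (Fin (m+1)))) hzero,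
    Finset.sum_pair h0l]
  have hd0 : cyc m z c 0 0 = z 0 := by simp [cyc]
  have hdl : cyc m z c (Fin.last m) 0 = c := by
    simp only [cyc, Matrix.of_apply]
    rw [if_neg (Ne.symm h0l), if_neg (by simp), if_pos (by simp)]
  rw [hd0, hdl, cyc_minor0, cyc_minorl, Fin.prod_univ_succ]
  simp only [Fin.val_zero, pow_zero, Fin.val_last, mul_one, one_mul]

theorem qin_ternary_matrix_goldbach (n : ℕ) (hn3 : 3 ≤ n) (hn : Odd n)
    (A : Matrix (Fin n) (Fin n) ℤ) (p : ℤ) :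
    ∃ X Y Z : Matrix (Fin n) (Fin n) ℤ,
      A = X + Y + Z ∧ X.det = p ∧ Y.det = p ∧ Z.det = p := by
  obtain ⟨m, rfl⟩ : ∃ m, n = m + 1 := ⟨n - 1, by omega⟩
  have hm : 1 ≤ m := by omega
  have hmeven : Even m := by
    rcases hn with ⟨k, hk⟩; exact ⟨k, by omega⟩
  set x : Fin (m+1) → ℤ := fun i => if i = 0 then p else 1 with hx
  have hxprod : ∏ i, x i = p := by
    rw [hx, Finset.prod_ite_eq' Finset.univ (0 : Fin (m+1)) (fun _ => p)]
    · simp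
  set z : Fin (m+1) → ℤ := fun i => A i i - x i - x i with hz
  set c : ℤ := p - ∏ i, z i with hc
  set Z : Matrix (Fin (m+1)) (Fin (m+1)) ℤ := cyc m z c with hZ
  set X : Matrix (Fin (m+1)) (Fin (m+1)) ℤ :=
    Matrix.of fun i j => if (j:ℕ) < (i:ℕ) then A i j - Z i j else if i = j then x i else 0 with hX
  set Y : Matrix (Fin (m+1)) (Fin (m+1)) ℤ :=
    Matrix.of fun i j => if (i:ℕ) < (j:ℕ) then A i j - Z i j else if i = j then x i else 0 with hY
  refine ⟨X, Y, Z, ?_, ?_, ?_, ?_⟩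
  · ext i j
    simp only [Matrix.add_apply, hX, hY, Matrix.of_apply]
    rcases lt_trichotomy (i:ℕ) (j:ℕ) with h | h | h
    · rw [if_neg (by omega), if_pos h, if_neg (by simp [Fin.ext_iff]; omega)]
      ring
    · have hij : i = j := Fin.ext h
      subst hij
      have hZd : Z i i = z i := by simp [hZ, cyc]
      simp only [lt_irrefl, if_false, if_pos rfl, if_true, hZd, hz]
      ring
    · rw [if_pos h, if_neg (by omega), if_neg (by simp [Fin.ext_iff]; omega)]
      ring
  · rw [Matrix.det_of_lowerTriangular]
    · rw [← hxprod]
      refine Finset.prod_congr rfl fun i _ => ?_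
      simp only [hX, Matrix.of_apply, lt_irrefl, if_false, if_pos rfl, if_true]
    · intro i j hij
      have hij' : (i:ℕ) < (j:ℕ) := hij
      simp only [hX, Matrix.of_apply]
      rw [if_neg (by omega), if_neg (by simp [Fin.ext_iff]; omega)]
  · rw [Matrix.det_of_upperTriangular]
    · rw [← hxprod]
      refine Finset.prod_congr rfl fun i _ => ?_
      simp only [hY, Matrix.of_apply, lt_irrefl, if_false, if_pos rfl, if_true]
    · intro i j hij
      have hij' : (j:ℕ) < (i:ℕ) := hij
      simp only [hY, Matrix.of_apply]
      rw [if_neg (by omega), if_neg (by simp [Fin.ext_iff]; omega)]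
  · rw [hZ, cyc_det m hm z c, hmeven.neg_one_pow, one_mul, hc]
    ring
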